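/- arXiv:2506.09382 — 2 statements merged into one kernel-verified Lean document; each statement's English description precedes it below -/
import Mathlib

section
/- Let $\lambda=(n_1,\dots,n_\ell)$ be a partition of $N$ and let $Z_2\subset\mathrm{Mat}_{2,N}(\mathbb{C})$ be the generic stratum (matrices $z$ such that $\det z_\mu\ne0$ for every subdiagram $\mu\subset\lambda$ with $|\mu|=2$). Then the Veronese map $\Phi_\lambda:\mathrm{Mat}_{2,N}(\mathbb{C})\to\mathrm{Mat}_{r+1,N}(\mathbb{C})$, defined blockwise by $\Phi_\lambda(z^{(1)},\dots,z^{(\ell)})=(\Phi_{n_1}(z^{(1)}),\dots,\Phi_{n_\ell}(z^{(\ell)}))$, maps $Z_2$ into the generic stratum $Z_{r+1}\subset\mathrm{Mat}_{r+1,N}(\mathbb{C})$ (matrices $w$ with $\det w_\mu\ne0$ for every subdiagram $\mu\subset\lambda$ with $|\mu|=r+1$). -/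
open Finset

/-- Entries of the generalized Veronese map `Φ_n : Mat_{2,n}(ℂ) → Mat_{r+1,n}(ℂ)`. -/
noncomputable def phiV (r n : ℕ) (z : Matrix (Fin 2) (Fin n) ℂ) (i : ℕ) (j : Fin n) : ℂ :=
  ∑ f ∈ (Fintype.piFinset fun _ : Fin r => (Finset.univ : Finset (Fin n))).filter
      (fun f => ∑ p, ((f p : ℕ)) = (j : ℕ)),
    ∏ p : Fin r, z (if (p : ℕ) < r - i then 0 else 1) (f p)

open Polynomial

lemma coeff_prod_fin {R : Type*} [CommSemiring R] (r nn : ℕ) (g : Fin r → R[X]) (j : ℕ)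
    (hj : j < nn) :
  (∏ p, g p).coeff j =
    ∑ f ∈ (Fintype.piFinset fun _ : Fin r => (Finset.univ : Finset (Fin nn))).filter
      (fun f => ∑ p, ((f p : ℕ)) = j), ∏ p, (g p).coeff ((f p : ℕ)) := by
  have hnn : 0 < nn := by omega
  have h1 : ((∏ p, g p : R[X]) : PowerSeries R) = ∏ p, ((g p : R[X]) : PowerSeries R) :=
    map_prod (Polynomial.coeToPowerSeries.ringHom) g Finset.univ
  have h2 : (∏ p, g p).coeff j = PowerSeries.coeff j ((∏ p, g p : R[X]) : PowerSeries R) := by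
    rw [Polynomial.coeff_coe]
  rw [h2, h1, PowerSeries.coeff_prod]
  have key : ∀ l ∈ Finset.finsuppAntidiag (Finset.univ : Finset (Fin r)) j,
      ∀ p : Fin r, l p ≤ j := by
    intro l hl p
    rw [Finset.mem_finsuppAntidiag] at hl
    rw [← hl.1]
    exact Finset.single_le_sum (f := fun i => l i) (fun i _ => Nat.zero_le _) (mem_univ p)
  refine Finset.sum_nbij' (i := fun l => fun p => (⟨l p % nn, Nat.mod_lt _ hnn⟩ : Fin nn))
    (j := fun f => Finsupp.equivFunOnFinite.symm (fun p => ((f p : ℕ)))) ?_ ?_ ?_ ?_ ?_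
  · intro l hl
    have := key l hl
    rw [Finset.mem_finsuppAntidiag] at hl
    simp only [Finset.mem_filter, Fintype.mem_piFinset, mem_univ, forall_const, true_and]
    refine ⟨fun _ => trivial, ?_⟩
    calc ∑ p : Fin r, (l p % nn) = ∑ p : Fin r, l p := by
          apply Finset.sum_congr rfl; intro p _; exact Nat.mod_eq_of_lt (by have := this p; omega)
      _ = j := hl.1
  · intro f hf
    simp only [Finset.mem_filter] at hf
    rw [Finset.mem_finsuppAntidiag]
    refine ⟨?_, fun x _ => mem_univ x⟩
    simpa using hf.2
  · intro l hl
    have := key l hl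
    ext p
    simp only [Finsupp.equivFunOnFinite_symm_apply_apply]
    exact Nat.mod_eq_of_lt (by have := this p; omega)
  · intro f hf
    ext p
    simp [Nat.mod_eq_of_lt (f p).2]
  · intro l hl
    have := key l hl
    apply Finset.prod_congr rfl
    intro p _
    rw [Polynomial.coeff_coe]
    congr 1
    exact (Nat.mod_eq_of_lt (by have := this p; omega)).symm

noncomputable def rowPoly (n : ℕ) (z : Matrix (Fin 2) (Fin n) ℂ) (i : Fin 2) : Polynomial ℂ :=
  ∑ j : Fin n, Polynomial.C (z i j) * Polynomial.X ^ (j : ℕ)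

lemma rowPoly_coeff' {n : ℕ} (z : Matrix (Fin 2) (Fin n) ℂ) (i : Fin 2) (j : Fin n) :
    (rowPoly n z i).coeff (j : ℕ) = z i j := by
  rw [rowPoly, Polynomial.finset_sum_coeff]
  rw [Finset.sum_eq_single j]
  · simp
  · intro b _ hb
    simp only [Polynomial.coeff_C_mul, Polynomial.coeff_X_pow]
    rw [if_neg (fun h => hb (Fin.ext h.symm)), mul_zero]
  · simp

lemma rowPoly_coeff_zero {n : ℕ} (z : Matrix (Fin 2) (Fin n) ℂ) (i : Fin 2) (m : ℕ)
    (hm : n ≤ m) : (rowPoly n z i).coeff m = 0 := by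
  rw [rowPoly, Polynomial.finset_sum_coeff]
  apply Finset.sum_eq_zero
  intro b _
  simp only [Polynomial.coeff_C_mul, Polynomial.coeff_X_pow]
  rw [if_neg (by omega : ¬ m = (b : ℕ)), mul_zero]

lemma card_filter_coe_lt (r k : ℕ) (hk : k ≤ r) :
    ((Finset.univ : Finset (Fin r)).filter fun p : Fin r => (p : ℕ) < k).card = k := by
  calc (Finset.univ.filter fun p : Fin r => (p : ℕ) < k).card
      = ∑ p : Fin r, (fun m : ℕ => if m < k then (1:ℕ) else 0) (p : ℕ) := by
        rw [Finset.card_filter]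
    _ = ∑ m ∈ Finset.range r, if m < k then 1 else 0 := Fin.sum_univ_eq_sum_range (fun m : ℕ => if m < k then (1:ℕ) else 0) r
    _ = ((Finset.range r).filter fun m => m < k).card := (Finset.card_filter _ _).symm
    _ = (Finset.range k).card := by congr 1; ext x; simp; omega
    _ = k := Finset.card_range k

lemma phiV_eq {r n : ℕ} (z : Matrix (Fin 2) (Fin n) ℂ) (i : ℕ) (hi : i ≤ r) (j : Fin n) :
    phiV r n z i j =
      ((rowPoly n z 0) ^ (r - i) * (rowPoly n z 1) ^ i).coeff (j : ℕ) := by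
  have hprod : (rowPoly n z 0) ^ (r - i) * (rowPoly n z 1) ^ i =
      ∏ p : Fin r, (if (p : ℕ) < r - i then rowPoly n z 0 else rowPoly n z 1) := by
    rw [Finset.prod_ite (fun _ => rowPoly n z 0) (fun _ => rowPoly n z 1)]
    rw [Finset.prod_const, Finset.prod_const]
    congr 1
    · congr 1
      exact (card_filter_coe_lt r (r - i) (Nat.sub_le r i)).symm
    · congr 1
      rw [Finset.filter_not, Finset.card_sdiff_of_subset (Finset.filter_subset _ _)]
      rw [card_filter_coe_lt r (r - i) (Nat.sub_le r i), Finset.card_univ, Fintype.card_fin]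
      omega
  rw [hprod, coeff_prod_fin r n _ (j : ℕ) j.2, phiV]
  apply Finset.sum_congr rfl
  intro f _
  apply Finset.prod_congr rfl
  intro p _
  by_cases h : (p : ℕ) < r - i
  · rw [if_pos h, if_pos h, rowPoly_coeff']
  · rw [if_neg h, if_neg h, rowPoly_coeff']

lemma homFactor : ∀ (r : ℕ) (q : Polynomial ℂ), q.natDegree ≤ r → ∀ (A B : Polynomial ℂ),
    ∑ i ∈ Finset.range (r+1), Polynomial.C (q.coeff i) * A ^ (r - i) * B ^ i
      = Polynomial.C q.leadingCoeff * A ^ (r - q.natDegree) *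
        (q.roots.map (fun ρ => B - Polynomial.C ρ * A)).prod := by
  intro r
  induction r with
  | zero =>
    intro q hq A B
    have : q = Polynomial.C (q.coeff 0) := Polynomial.eq_C_of_natDegree_eq_zero (by omega)
    rw [this]
    simp [Polynomial.leadingCoeff]
  | succ r IH =>
    intro q hq A B
    by_cases hd : q.natDegree = 0
    · have hqC : q = Polynomial.C (q.coeff 0) := Polynomial.eq_C_of_natDegree_eq_zero hd
      rw [Finset.sum_eq_single_of_mem 0 (Finset.mem_range.2 (by omega))]
      · rw [hqC]; simp [Polynomial.leadingCoeff]
      · intro i _ hi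
        rw [hqC, Polynomial.coeff_C, if_neg hi]
        simp
    · have hq0 : q ≠ 0 := fun h => hd (by simp [h])
      obtain ⟨ρ, hρ⟩ := Complex.exists_root (Polynomial.natDegree_pos_iff_degree_pos.1
        (Nat.pos_of_ne_zero hd))
      obtain ⟨q₁, hq₁⟩ := (Polynomial.dvd_iff_isRoot.2 hρ)
      have hXC : (Polynomial.X - Polynomial.C ρ : Polynomial ℂ) ≠ 0 := Polynomial.X_sub_C_ne_zero ρ
      have hq₁0 : q₁ ≠ 0 := by rintro rfl; rw [mul_zero] at hq₁; exact hq0 hq₁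
      have hdeg : q.natDegree = q₁.natDegree + 1 := by
        rw [hq₁, Polynomial.natDegree_mul hXC hq₁0, Polynomial.natDegree_X_sub_C]
        omega
      have hd1 : q₁.natDegree ≤ r := by omega
      have hlc : q.leadingCoeff = q₁.leadingCoeff := by
        rw [hq₁, Polynomial.leadingCoeff_mul, (Polynomial.monic_X_sub_C ρ).leadingCoeff, one_mul]
      have hroots : q.roots = ρ ::ₘ q₁.roots := by
        rw [hq₁, Polynomial.roots_mul (hq₁ ▸ hq0), Polynomial.roots_X_sub_C]
        rfl
      have key : ∑ i ∈ Finset.range (r+1+1), Polynomial.C (q.coeff i) * A ^ (r+1 - i) * B ^ i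
          = (B - Polynomial.C ρ * A) *
            ∑ i ∈ Finset.range (r+1), Polynomial.C (q₁.coeff i) * A ^ (r - i) * B ^ i := by
        have hco : ∀ i, q.coeff i = (Polynomial.X * q₁).coeff i - ρ * q₁.coeff i := by
          intro i
          rw [hq₁, sub_mul, Polynomial.coeff_sub, Polynomial.coeff_C_mul]
        calc ∑ i ∈ Finset.range (r+1+1), Polynomial.C (q.coeff i) * A ^ (r+1 - i) * B ^ i
            = ∑ i ∈ Finset.range (r+1+1),
              (Polynomial.C ((Polynomial.X * q₁).coeff i) * A ^ (r+1 - i) * B ^ i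
               - Polynomial.C ρ * (Polynomial.C (q₁.coeff i) * A ^ (r+1 - i) * B ^ i)) := by
              apply Finset.sum_congr rfl
              intro i _
              rw [hco i]
              push_cast [Polynomial.C_sub, Polynomial.C_mul]
              ring
          _ = (∑ i ∈ Finset.range (r+1+1),
                Polynomial.C ((Polynomial.X * q₁).coeff i) * A ^ (r+1 - i) * B ^ i)
              - Polynomial.C ρ * ∑ i ∈ Finset.range (r+1+1),
                Polynomial.C (q₁.coeff i) * A ^ (r+1 - i) * B ^ i := by
              rw [Finset.sum_sub_distrib, Finset.mul_sum]
          _ = B * (∑ i ∈ Finset.range (r+1), Polynomial.C (q₁.coeff i) * A ^ (r - i) * B ^ i)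
              - Polynomial.C ρ * (A * ∑ i ∈ Finset.range (r+1),
                  Polynomial.C (q₁.coeff i) * A ^ (r - i) * B ^ i) := by
              congr 1
              · rw [Finset.sum_range_succ']
                have h0 : (Polynomial.X * q₁).coeff 0 = 0 := by
                  simp [Polynomial.mul_coeff_zero]
                rw [h0]
                simp only [Polynomial.C_0, zero_mul, add_zero]
                rw [Finset.mul_sum]
                apply Finset.sum_congr rfl
                intro i hi
                rw [Polynomial.coeff_X_mul]
                have : r + 1 - (i + 1) = r - i := by omega
                rw [this]
                ring
              · congr 1
                rw [Finset.sum_range_succ]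
                have h0 : q₁.coeff (r+1) = 0 :=
                  Polynomial.coeff_eq_zero_of_natDegree_lt (by omega)
                rw [h0]
                simp only [Polynomial.C_0, zero_mul, add_zero]
                rw [Finset.mul_sum]
                apply Finset.sum_congr rfl
                intro i hi
                have hi' : i ≤ r := by simpa [Nat.lt_succ_iff] using hi
                have : r + 1 - i = (r - i) + 1 := by omega
                rw [this, pow_succ]
                ring
          _ = (B - Polynomial.C ρ * A) *
              ∑ i ∈ Finset.range (r+1), Polynomial.C (q₁.coeff i) * A ^ (r - i) * B ^ i := by
              ring
      rw [key, IH q₁ hd1 A B, hroots, hlc, hdeg]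
      have : r + 1 - (q₁.natDegree + 1) = r - q₁.natDegree := by omega
      rw [this, Multiset.map_cons, Multiset.prod_cons]
      ring

lemma rm0_le_one {g : Polynomial ℂ} (h1 : g.coeff 1 ≠ 0) :
    Polynomial.rootMultiplicity 0 g ≤ 1 := by
  have hg : g ≠ 0 := fun h => h1 (by simp [h])
  rw [Polynomial.rootMultiplicity_le_iff hg]
  simp only [Polynomial.C_0, sub_zero]
  rw [Polynomial.X_pow_dvd_iff]
  push_neg
  exact ⟨1, by norm_num, h1⟩

lemma one_le_rm0 {g : Polynomial ℂ} (hg : g ≠ 0) (h0 : g.coeff 0 = 0) :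
    1 ≤ Polynomial.rootMultiplicity 0 g := by
  rw [Polynomial.le_rootMultiplicity_iff hg]
  simp only [Polynomial.C_0, sub_zero]
  rw [Polynomial.X_pow_dvd_iff]
  intro d hd
  interval_cases d
  exact h0

lemma rm0_multiset_prod (t : Multiset (Polynomial ℂ)) (ht : ∀ g ∈ t, g ≠ 0) :
    Polynomial.rootMultiplicity 0 t.prod
      = (t.map (Polynomial.rootMultiplicity 0)).sum := by
  induction t using Multiset.induction_on with
  | empty =>
    simp only [Multiset.map_zero, Multiset.sum_zero, Multiset.prod_zero]
    exact Polynomial.rootMultiplicity_eq_zero (by simp [Polynomial.IsRoot])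
  | cons a s IH =>
    have ha : a ≠ 0 := ht a (Multiset.mem_cons_self a s)
    have hs : ∀ g ∈ s, g ≠ 0 := fun g hg => ht g (Multiset.mem_cons_of_mem hg)
    have hsprod : s.prod ≠ 0 := Multiset.prod_ne_zero (fun h => hs 0 h rfl)
    rw [Multiset.prod_cons, Polynomial.rootMultiplicity_mul (mul_ne_zero ha hsprod),
      Multiset.map_cons, Multiset.sum_cons, IH hs]

lemma sum_map_le_card_filter {α : Type*} (S : Multiset α) (m : α → ℕ) (P : α → Prop)
    [DecidablePred P] (h : ∀ x ∈ S, m x ≤ 1 ∧ (1 ≤ m x → P x)) :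
    (S.map m).sum ≤ (S.filter P).card := by
  induction S using Multiset.induction_on with
  | empty => simp
  | cons a s IH =>
    have ha := h a (Multiset.mem_cons_self a s)
    have hs : ∀ x ∈ s, m x ≤ 1 ∧ (1 ≤ m x → P x) :=
      fun x hx => h x (Multiset.mem_cons_of_mem hx)
    rw [Multiset.map_cons, Multiset.sum_cons, Multiset.filter_cons]
    by_cases hP : P a
    · simp only [if_pos hP]
      rw [Multiset.card_add, Multiset.card_singleton]
      have := IH hs
      omega
    · have hma : m a = 0 := by
        rcases Nat.eq_zero_or_pos (m a) with h0 | h0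
        · exact h0
        · exact absurd (ha.2 h0) hP
      simp only [if_neg hP, hma, zero_add]
      simpa using IH hs
  
lemma sum_card_filter_le {ι α : Type*} [Fintype ι] (S : Multiset α) (P : ι → α → Prop)
    [∀ k, DecidablePred (P k)] (hdisj : ∀ x k k', P k x → P k' x → k = k') :
    ∑ k, (S.filter (P k)).card ≤ Multiset.card S := by
  classical
  have hle : (∑ k, S.filter (P k)) ≤ S := by
    rw [Multiset.le_iff_count]
    intro x
    rw [Multiset.count_sum']
    by_cases hx : ∃ k, P k x
    · obtain ⟨k₀, hk₀⟩ := hx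
      rw [Finset.sum_eq_single k₀]
      · rw [Multiset.count_filter, if_pos hk₀]
      · intro k _ hk
        rw [Multiset.count_filter, if_neg (fun h => hk (hdisj x k k₀ h hk₀))]
      · intro h
        exact absurd (Finset.mem_univ k₀) h
    · push_neg at hx
      rw [Finset.sum_eq_zero]
      · omega
      · intro k _
        rw [Multiset.count_filter, if_neg (hx k)]
  have h2 := Multiset.card_le_card hle
  have hcard : Multiset.card (∑ k : ι, Multiset.filter (P k) S)
      = ∑ k, Multiset.card (Multiset.filter (P k) S) :=
    map_sum (⟨⟨Multiset.card, Multiset.card_zero⟩, Multiset.card_add⟩ : Multiset α →+ ℕ) _ _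
  exact le_trans (le_of_eq hcard.symm) h2

lemma pair_det_ne_zero {ι : Type*} {w : ι → (Fin 2 → ℂ)}
    (hw : LinearIndependent ℂ w) {p₀ p₁ : ι} (hne : p₀ ≠ p₁) :
    w p₀ 0 * w p₁ 1 - w p₀ 1 * w p₁ 0 ≠ 0 := by
  have hinj : Function.Injective ![p₀, p₁] := by
    intro s t h
    fin_cases s <;> fin_cases t <;> simp_all
  have h2 : LinearIndependent ℂ (w ∘ ![p₀, p₁]) := hw.comp _ hinj
  have h3 : LinearIndependent ℂ
      (Matrix.of fun s i => (w ∘ ![p₀, p₁]) s i).row := h2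
  rw [Matrix.linearIndependent_rows_iff_isUnit] at h3
  have h4 := (Matrix.isUnit_iff_isUnit_det _).1 h3
  rw [Matrix.det_fin_two] at h4
  simpa using h4.ne_zero

lemma annih_zero {a0 b0 a1 b1 l1 l2 : ℂ} (hdet : a0 * b1 - a1 * b0 ≠ 0)
    (h0 : l1 * a0 + l2 * b0 = 0) (h1 : l1 * a1 + l2 * b1 = 0) : l1 = 0 ∧ l2 = 0 := by
  have hh1 : l1 * (a0 * b1 - a1 * b0) = 0 := by linear_combination b1 * h0 - b0 * h1
  have hh2 : l2 * (a0 * b1 - a1 * b0) = 0 := by linear_combination a0 * h1 - a1 * h0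
  exact ⟨(mul_eq_zero.1 hh1).resolve_right hdet, (mul_eq_zero.1 hh2).resolve_right hdet⟩

/-- the blockwise Veronese map `Φ_λ` sends the generic stratum
`Z₂ ⊂ Mat_{2,N}(ℂ)` into the generic stratum `Z_{r+1} ⊂ Mat_{r+1,N}(ℂ)`
(genericity: for every subdiagram `μ ⊂ λ` of the appropriate weight, the square matrix of
selected columns is nonsingular, i.e. the selected columns are linearly independent). -/
theorem stmt7 (ℓ r : ℕ) (n : Fin ℓ → ℕ) (z : ∀ k, Matrix (Fin 2) (Fin (n k)) ℂ)
    (hz : ∀ μ : Fin ℓ → ℕ, ∀ hμ : (∀ k, μ k ≤ n k), (∑ k, μ k) = 2 →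
      LinearIndependent ℂ
        (fun p : (Σ k, Fin (μ k)) => fun i : Fin 2 => z p.1 i (Fin.castLE (hμ p.1) p.2))) :
    ∀ μ : Fin ℓ → ℕ, ∀ hμ : (∀ k, μ k ≤ n k), (∑ k, μ k) = r + 1 →
      LinearIndependent ℂ
        (fun p : (Σ k, Fin (μ k)) => fun i : Fin (r + 1) =>
          phiV r (n p.1) (z p.1) (i : ℕ) (Fin.castLE (hμ p.1) p.2)) := by
  classical
  intro μ hμ hsum
  by_contra hnli
  set v : (Σ k, Fin (μ k)) → (Fin (r+1) → ℂ) :=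
    fun p => fun i : Fin (r+1) => phiV r (n p.1) (z p.1) (i : ℕ) (Fin.castLE (hμ p.1) p.2)
    with hv
  have hcard : Fintype.card (Σ k, Fin (μ k)) = r + 1 := by
    simp [Fintype.card_sigma, hsum]
  have e : (Σ k, Fin (μ k)) ≃ Fin (r+1) := Fintype.equivFinOfCardEq hcard
  set M : Matrix (Fin (r+1)) (Fin (r+1)) ℂ := Matrix.of (fun a i => v (e.symm a) i) with hM
  have hMli : ¬ LinearIndependent ℂ (fun a : Fin (r+1) => M a) := by
    intro h
    exact hnli ((linearIndependent_equiv e.symm).1 h)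
  have hdet : M.det = 0 := by
    by_contra hd
    exact hMli (Matrix.linearIndependent_rows_iff_isUnit.2
      ((Matrix.isUnit_iff_isUnit_det M).2 (isUnit_iff_ne_zero.2 hd)))
  obtain ⟨lam, hlam0, hlamv⟩ := Matrix.exists_mulVec_eq_zero_iff.2 hdet
  have hann : ∀ p : (Σ k, Fin (μ k)), ∑ i : Fin (r+1), lam i * v p i = 0 := by
    intro p
    have h1 := congrFun hlamv (e p)
    simp only [Matrix.mulVec, dotProduct, Pi.zero_apply] at h1
    rw [← h1]
    apply Finset.sum_congr rfl
    intro i _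
    simp only [hM, Matrix.of_apply, Equiv.symm_apply_apply, mul_comm]
  -- polynomials
  set A : Fin ℓ → Polynomial ℂ := fun k => rowPoly (n k) (z k) 0 with hA
  set B : Fin ℓ → Polynomial ℂ := fun k => rowPoly (n k) (z k) 1 with hB
  set lam' : ℕ → ℂ := fun m => if h : m < r+1 then lam ⟨m, h⟩ else 0 with hlam'
  set q : Polynomial ℂ := ∑ m ∈ Finset.range (r+1), Polynomial.C (lam' m) * Polynomial.X ^ m
    with hq
  have hqc : ∀ m : ℕ, q.coeff m = lam' m := by
    intro m
    rw [hq, Polynomial.finset_sum_coeff]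
    by_cases hm : m < r + 1
    · rw [Finset.sum_eq_single m]
      · simp
      · intro i _ him
        simp only [Polynomial.coeff_C_mul, Polynomial.coeff_X_pow]
        rw [if_neg (Ne.symm him), mul_zero]
      · intro hmem
        exact absurd (Finset.mem_range.2 hm) hmem
    · rw [Finset.sum_eq_zero, eq_comm]
      · simp only [hlam']
        rw [dif_neg hm]
      · intro i hi
        have hne : ¬ (m = i) := by
          have := Finset.mem_range.1 hi; omega
        simp only [Polynomial.coeff_C_mul, Polynomial.coeff_X_pow]
        rw [if_neg hne, mul_zero]
  have hqcf : ∀ i : Fin (r+1), q.coeff (i : ℕ) = lam i := by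
    intro i
    rw [hqc]
    simp only [hlam']
    rw [dif_pos i.isLt]
  have hq0 : q ≠ 0 := by
    obtain ⟨i, hi⟩ := Function.ne_iff.1 hlam0
    intro h
    apply hi
    rw [← hqcf i, h, Polynomial.coeff_zero]
    rfl
  have hdle : q.natDegree ≤ r := by
    apply Polynomial.natDegree_le_iff_coeff_eq_zero.2
    intro m hm
    rw [hqc]
    simp only [hlam']
    rw [dif_neg (by omega)]
  set G : Fin ℓ → Polynomial ℂ := fun k =>
    ∑ i ∈ Finset.range (r+1), Polynomial.C (q.coeff i) * (A k)^(r-i) * (B k)^i with hG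
  have hGcoeff : ∀ k, ∀ s : ℕ, s < μ k → (G k).coeff s = 0 := by
    intro k s hs
    have hsn : s < n k := lt_of_lt_of_le hs (hμ k)
    have h1 := hann ⟨k, ⟨s, hs⟩⟩
    have h2 : ∀ i : Fin (r+1), v ⟨k, ⟨s, hs⟩⟩ i
        = ((A k)^(r-(i:ℕ)) * (B k)^(i:ℕ)).coeff s := by
      intro i
      simp only [hv, hA, hB]
      rw [phiV_eq (z k) (i : ℕ) (by omega : (i:ℕ) ≤ r) (Fin.castLE (hμ k) ⟨s, hs⟩)]
      rfl
    simp only [hG]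
    rw [Polynomial.finset_sum_coeff]
    calc ∑ i ∈ Finset.range (r+1), (Polynomial.C (q.coeff i) * (A k)^(r-i) * (B k)^i).coeff s
        = ∑ i ∈ Finset.range (r+1), q.coeff i * ((A k)^(r-i) * (B k)^i).coeff s := by
          apply Finset.sum_congr rfl
          intro i _
          rw [mul_assoc, Polynomial.coeff_C_mul]
      _ = ∑ i : Fin (r+1), q.coeff (i:ℕ) * ((A k)^(r-(i:ℕ)) * (B k)^(i:ℕ)).coeff s :=
          (Fin.sum_univ_eq_sum_range (fun m => q.coeff m * ((A k)^(r-m) * (B k)^m).coeff s)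
            (r+1)).symm
      _ = ∑ i : Fin (r+1), lam i * v ⟨k, ⟨s, hs⟩⟩ i := by
          apply Finset.sum_congr rfl
          intro i _
          rw [hqcf i, h2 i]
      _ = 0 := h1
  set d : ℕ := q.natDegree with hd
  set c : ℂ := q.leadingCoeff with hc
  have hc0 : c ≠ 0 := Polynomial.leadingCoeff_ne_zero.2 hq0
  set S : Multiset (ℂ × ℂ) :=
    Multiset.replicate (r - d) ((1:ℂ), (0:ℂ)) + q.roots.map (fun ρ => (-ρ, (1:ℂ))) with hS
  set fact : (ℂ × ℂ) → Fin ℓ → Polynomial ℂ :=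
    fun l k => Polynomial.C l.1 * A k + Polynomial.C l.2 * B k with hfact
  have hGS : ∀ k, G k = Polynomial.C c * (S.map (fun l => fact l k)).prod := by
    intro k
    simp only [hG]
    rw [homFactor r q hdle (A k) (B k)]
    rw [hS, Multiset.map_add, Multiset.prod_add, Multiset.map_replicate,
      Multiset.prod_replicate, Multiset.map_map]
    have e1 : fact ((1:ℂ), (0:ℂ)) k = A k := by simp [hfact]
    have e2 : (q.roots.map (fun ρ => fact (-ρ, (1:ℂ)) k)).prod
        = (q.roots.map (fun ρ => B k - Polynomial.C ρ * A k)).prod := by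
      apply congrArg
      apply Multiset.map_congr rfl
      intro ρ _
      simp only [hfact, map_neg, map_one, one_mul]
      ring
    rw [Function.comp_def]
    rw [e1, e2, ← hd, ← hc]
    ring
  have hroots_card : Multiset.card q.roots = d :=
    Polynomial.splits_iff_card_roots.1 (IsAlgClosed.splits q)
  have hScard : Multiset.card S = r := by
    rw [hS, Multiset.card_add, Multiset.card_replicate, Multiset.card_map, hroots_card]
    omega
  have hSne : ∀ l ∈ S, l ≠ ((0:ℂ), (0:ℂ)) := by
    intro l hl
    rw [hS, Multiset.mem_add] at hl
    rcases hl with hl | hl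
    · rw [Multiset.eq_of_mem_replicate hl]
      intro h
      exact one_ne_zero (congrArg Prod.fst h)
    · obtain ⟨ρ, _, hρ⟩ := Multiset.mem_map.1 hl
      rw [← hρ]
      intro h
      exact one_ne_zero (congrArg Prod.snd h)
  have hfc0 : ∀ l k', (fact l k').coeff 0 = l.1 * (A k').coeff 0 + l.2 * (B k').coeff 0 := by
    intro l k'
    simp [hfact]
  have hfc1 : ∀ l k', (fact l k').coeff 1 = l.1 * (A k').coeff 1 + l.2 * (B k').coeff 1 := by
    intro l k'
    simp [hfact]
  -- determinant facts from hz
  have hdet_in : ∀ k, 2 ≤ μ k →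
      (A k).coeff 0 * (B k).coeff 1 - (A k).coeff 1 * (B k).coeff 0 ≠ 0 := by
    intro k h2k
    have h2n : 2 ≤ n k := le_trans h2k (hμ k)
    set μ2 : Fin ℓ → ℕ := fun m => if m = k then 2 else 0 with hμ2
    have hμ2le : ∀ m, μ2 m ≤ n m := by
      intro m
      by_cases hm : m = k
      · subst hm; simp [hμ2, h2n]
      · simp [hμ2, hm]
    have hsum2 : ∑ m, μ2 m = 2 := by
      simp [hμ2, Finset.sum_ite_eq']
    have li := hz μ2 hμ2le hsum2
    have h0lt : 0 < μ2 k := by simp [hμ2]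
    have h1lt : 1 < μ2 k := by simp [hμ2]
    set p₀ : (Σ m, Fin (μ2 m)) := ⟨k, ⟨0, h0lt⟩⟩ with hp₀
    set p₁ : (Σ m, Fin (μ2 m)) := ⟨k, ⟨1, h1lt⟩⟩ with hp₁
    have hne : p₀ ≠ p₁ := by
      intro h
      have := congrArg (fun p : (Σ m, Fin (μ2 m)) => (p.2 : ℕ)) h
      simp [hp₀, hp₁] at this
    have hdn := pair_det_ne_zero li hne
    have e00 : (A k).coeff 0 = z k 0 (Fin.castLE (hμ2le k) ⟨0, h0lt⟩) := by
      simp only [hA]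
      simpa using rowPoly_coeff' (z k) 0 (Fin.castLE (hμ2le k) ⟨0, h0lt⟩)
    have e01 : (B k).coeff 0 = z k 1 (Fin.castLE (hμ2le k) ⟨0, h0lt⟩) := by
      simp only [hB]
      simpa using rowPoly_coeff' (z k) 1 (Fin.castLE (hμ2le k) ⟨0, h0lt⟩)
    have e10 : (A k).coeff 1 = z k 0 (Fin.castLE (hμ2le k) ⟨1, h1lt⟩) := by
      simp only [hA]
      simpa using rowPoly_coeff' (z k) 0 (Fin.castLE (hμ2le k) ⟨1, h1lt⟩)
    have e11 : (B k).coeff 1 = z k 1 (Fin.castLE (hμ2le k) ⟨1, h1lt⟩) := by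
      simp only [hB]
      simpa using rowPoly_coeff' (z k) 1 (Fin.castLE (hμ2le k) ⟨1, h1lt⟩)
    intro h
    apply hdn
    show z k 0 (Fin.castLE (hμ2le k) ⟨0, h0lt⟩) * z k 1 (Fin.castLE (hμ2le k) ⟨1, h1lt⟩) - z k 1 (Fin.castLE (hμ2le k) ⟨0, h0lt⟩) * z k 0 (Fin.castLE (hμ2le k) ⟨1, h1lt⟩) = 0
    rw [← e00, ← e01, ← e10, ← e11]
    linear_combination h
  have hdet_cross : ∀ k k', k ≠ k' → μ k ≠ 0 → μ k' ≠ 0 →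
      (A k).coeff 0 * (B k').coeff 0 - (A k').coeff 0 * (B k).coeff 0 ≠ 0 := by
    intro k k' hkk hk hk'
    have h1n : 1 ≤ n k := le_trans (by omega) (hμ k)
    have h1n' : 1 ≤ n k' := le_trans (by omega) (hμ k')
    set μ2 : Fin ℓ → ℕ := fun m => if m = k then 1 else if m = k' then 1 else 0 with hμ2
    have hμ2le : ∀ m, μ2 m ≤ n m := by
      intro m
      by_cases hm : m = k
      · subst hm; simp [hμ2, h1n]
      · by_cases hm' : m = k'
        · subst hm'; simp [hμ2, hm, h1n']
        · simp [hμ2, hm, hm']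
    have hsum2 : ∑ m, μ2 m = 2 := by
      have hterm : ∀ m, μ2 m = (if m = k then 1 else 0) + (if m = k' then 1 else 0) := by
        intro m
        by_cases hm : m = k
        · subst hm; simp [hμ2, hkk]
        · by_cases hm' : m = k' <;> simp [hμ2, hm, hm', Ne.symm hkk]
      rw [Finset.sum_congr rfl (fun m _ => hterm m), Finset.sum_add_distrib]
      simp [Finset.sum_ite_eq']
    have li := hz μ2 hμ2le hsum2
    have h0lt : 0 < μ2 k := by simp [hμ2]
    have h0lt' : 0 < μ2 k' := by simp [hμ2, Ne.symm hkk]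
    set p₀ : (Σ m, Fin (μ2 m)) := ⟨k, ⟨0, h0lt⟩⟩ with hp₀
    set p₁ : (Σ m, Fin (μ2 m)) := ⟨k', ⟨0, h0lt'⟩⟩ with hp₁
    have hne : p₀ ≠ p₁ := by
      intro h
      exact hkk (congrArg Sigma.fst h)
    have hdn := pair_det_ne_zero li hne
    have e00 : (A k).coeff 0 = z k 0 (Fin.castLE (hμ2le k) ⟨0, h0lt⟩) := by
      simp only [hA]
      simpa using rowPoly_coeff' (z k) 0 (Fin.castLE (hμ2le k) ⟨0, h0lt⟩)
    have e01 : (B k).coeff 0 = z k 1 (Fin.castLE (hμ2le k) ⟨0, h0lt⟩) := by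
      simp only [hB]
      simpa using rowPoly_coeff' (z k) 1 (Fin.castLE (hμ2le k) ⟨0, h0lt⟩)
    have e10 : (A k').coeff 0 = z k' 0 (Fin.castLE (hμ2le k') ⟨0, h0lt'⟩) := by
      simp only [hA]
      simpa using rowPoly_coeff' (z k') 0 (Fin.castLE (hμ2le k') ⟨0, h0lt'⟩)
    have e11 : (B k').coeff 0 = z k' 1 (Fin.castLE (hμ2le k') ⟨0, h0lt'⟩) := by
      simp only [hB]
      simpa using rowPoly_coeff' (z k') 1 (Fin.castLE (hμ2le k') ⟨0, h0lt'⟩)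
    intro h
    apply hdn
    show z k 0 (Fin.castLE (hμ2le k) ⟨0, h0lt⟩) * z k' 1 (Fin.castLE (hμ2le k') ⟨0, h0lt'⟩) - z k 1 (Fin.castLE (hμ2le k) ⟨0, h0lt⟩) * z k' 0 (Fin.castLE (hμ2le k') ⟨0, h0lt'⟩) = 0
    rw [← e00, ← e01, ← e10, ← e11]
    linear_combination h
  -- the hitting predicate
  set P : Fin ℓ → (ℂ × ℂ) → Prop := fun k l =>
    μ k ≠ 0 ∧ l ≠ ((0:ℂ), (0:ℂ)) ∧ l.1 * (A k).coeff 0 + l.2 * (B k).coeff 0 = 0 with hP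
  have hdisj : ∀ x k k', P k x → P k' x → k = k' := by
    intro x k k' h1 h2
    by_contra hkk
    obtain ⟨hk1, hx0, hk2⟩ := h1
    obtain ⟨hk1', -, hk2'⟩ := h2
    obtain ⟨e1, e2⟩ := annih_zero (hdet_cross k k' hkk hk1 hk1') hk2 hk2'
    exact hx0 (Prod.ext e1 e2)
  have hbound : ∀ k, μ k ≤ Multiset.card (S.filter (P k)) := by
    intro k
    by_cases hk0 : μ k = 0
    · exact le_trans (Nat.le_of_eq hk0) (Nat.zero_le _)
    rcases Nat.lt_or_ge (μ k) 2 with hk1 | hk2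
    · -- μ k = 1
      have hμk1 : μ k = 1 := by omega
      have hc00 : (G k).coeff 0 = 0 := hGcoeff k 0 (by omega)
      rw [hGS k, Polynomial.mul_coeff_zero, Polynomial.coeff_zero_multiset_prod] at hc00
      have hCc : (Polynomial.C c).coeff 0 = c := Polynomial.coeff_C_zero
      rw [hCc] at hc00
      have hprod0 : (((S.map (fun l => fact l k)).map (fun g => g.coeff 0))).prod = 0 :=
        (mul_eq_zero.1 hc00).resolve_left hc0
      rw [Multiset.map_map] at hprod0
      have h0mem : (0:ℂ) ∈ S.map (fun l => (fact l k).coeff 0) := by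
        rw [← Multiset.prod_eq_zero_iff]
        exact hprod0
      obtain ⟨l, hlS, hl0⟩ := Multiset.mem_map.1 h0mem
      have hPl : P k l := by
        refine ⟨hk0, hSne l hlS, ?_⟩
        rw [← hfc0 l k, hl0]
      have hmem : l ∈ S.filter (P k) := Multiset.mem_filter.2 ⟨hlS, hPl⟩
      exact le_trans (Nat.le_of_eq hμk1) (Multiset.card_pos_iff_exists_mem.2 ⟨l, hmem⟩)
    · -- 2 ≤ μ k
      have hdetk := hdet_in k hk2
      have hfact01 : ∀ l ∈ S, ¬((fact l k).coeff 0 = 0 ∧ (fact l k).coeff 1 = 0) := by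
        intro l hl hcc
        obtain ⟨h0, h1⟩ := hcc
        rw [hfc0] at h0
        rw [hfc1] at h1
        obtain ⟨e1, e2⟩ := annih_zero hdetk h0 h1
        exact hSne l hl (Prod.ext e1 e2)
      have hfactne : ∀ l ∈ S, fact l k ≠ 0 := by
        intro l hl h
        exact hfact01 l hl ⟨by rw [h]; simp, by rw [h]; simp⟩
      have hmapne : ∀ g ∈ S.map (fun l => fact l k), g ≠ 0 := by
        intro g hg
        obtain ⟨l, hl, rfl⟩ := Multiset.mem_map.1 hg
        exact hfactne l hl
      have hprodne : ((S.map (fun l => fact l k))).prod ≠ 0 :=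
        Multiset.prod_ne_zero (fun h => hmapne 0 h rfl)
      have hGne : G k ≠ 0 := by
        rw [hGS k]
        exact mul_ne_zero (by simpa using hc0) hprodne
      have hrm : μ k ≤ Polynomial.rootMultiplicity 0 (G k) := by
        rw [Polynomial.le_rootMultiplicity_iff hGne]
        simp only [Polynomial.C_0, sub_zero]
        rw [Polynomial.X_pow_dvd_iff]
        intro dd hdd
        exact hGcoeff k dd hdd
      have hrmC : Polynomial.rootMultiplicity 0 (Polynomial.C c) = 0 :=
        Polynomial.rootMultiplicity_eq_zero (by simp [Polynomial.IsRoot, hc0])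
      have hrmsplit : Polynomial.rootMultiplicity 0 (G k)
          = (S.map (fun l => Polynomial.rootMultiplicity 0 (fact l k))).sum := by
        rw [hGS k, Polynomial.rootMultiplicity_mul
            (mul_ne_zero (by simpa using hc0) hprodne), hrmC, zero_add,
          rm0_multiset_prod _ hmapne, Multiset.map_map]
        rfl
      rw [hrmsplit] at hrm
      refine le_trans hrm (sum_map_le_card_filter S _ (P k) ?_)
      intro l hl
      by_cases hc1 : (fact l k).coeff 1 = 0
      · have hc0' : (fact l k).coeff 0 ≠ 0 := fun h => hfact01 l hl ⟨h, hc1⟩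
        have hz' : Polynomial.rootMultiplicity 0 (fact l k) = 0 :=
          Polynomial.rootMultiplicity_eq_zero (by
            rw [Polynomial.IsRoot.def, ← Polynomial.coeff_zero_eq_eval_zero]
            exact hc0')
        rw [hz']
        exact ⟨by omega, by omega⟩
      · refine ⟨rm0_le_one hc1, fun h1 => ?_⟩
        by_cases hc0' : (fact l k).coeff 0 = 0
        · refine ⟨hk0, hSne l hl, ?_⟩
          rw [← hfc0 l k]
          exact hc0'
        · have hz' : Polynomial.rootMultiplicity 0 (fact l k) = 0 :=
            Polynomial.rootMultiplicity_eq_zero (by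
              rw [Polynomial.IsRoot.def, ← Polynomial.coeff_zero_eq_eval_zero]
              exact hc0')
          omega
  have hfinal := sum_card_filter_le S P hdisj
  have : r + 1 ≤ r := by
    calc r + 1 = ∑ k, μ k := hsum.symm
      _ ≤ ∑ k, Multiset.card (S.filter (P k)) := Finset.sum_le_sum (fun k _ => hbound k)
      _ ≤ Multiset.card S := hfinal
      _ = r := hScard
  omega
end

section
/- Let $b\in\mathbb{C}^N$ be nonzero, written in blocks $b^{(k)}\in\mathbb{C}^{n_k}$ according to a partition $\lambda=(n_1,\dots,n_\ell)$ of $N$, and for each $k$ let $m_k$ be minimal with $b_{m_k}^{(k)}=\cdots=b_{n_k-1}^{(k)}=0$ (so $b_{m_k-1}^{(k)}\ne0$ if $m_k>0$). If $z\in Z_{r+1}$ is in the generic stratum and $zb=0$, then $m_1+\cdots+m_\ell > r+1$. -/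
lemma exists_between_aux {ℓ : ℕ} (n : Fin ℓ → ℕ) (t : ℕ) (h2 : t ≤ ∑ k, n k) :
    ∀ d (m : Fin ℓ → ℕ), (∀ k, m k ≤ n k) → (∑ k, m k) + d = t →
    ∃ ν : Fin ℓ → ℕ, (∀ k, m k ≤ ν k) ∧ (∀ k, ν k ≤ n k) ∧ ∑ k, ν k = t := by
  intro d
  induction d with
  | zero => exact fun m hmn hsum => ⟨m, fun k => le_refl _, hmn, by omega⟩
  | succ d ih =>
    intro m hmn hsum
    have h : ∑ k, m k < ∑ k, n k := by omega
    obtain ⟨k, hk⟩ : ∃ k, m k < n k := by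
      by_contra h'
      push_neg at h'
      exact absurd (Finset.sum_le_sum fun k _ => h' k) (not_le.2 h)
    set m' : Fin ℓ → ℕ := fun j => m j + if j = k then 1 else 0 with hm'
    have hsum' : ∑ j, m' j = ∑ j, m j + 1 := by
      rw [hm', Finset.sum_add_distrib, Finset.sum_ite_eq' Finset.univ k (fun _ => 1),
        if_pos (Finset.mem_univ k)]
    have hmn' : ∀ j, m' j ≤ n j := by
      intro j
      by_cases hj : j = k
      · subst hj; simp [hm']; omega
      · simpa only [hm', if_neg hj, add_zero] using hmn j
    obtain ⟨ν, h1, h2', h3⟩ := ih m' hmn' (by rw [hsum']; omega)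
    exact ⟨ν, fun j => le_trans (Nat.le_add_right _ _) (h1 j), h2', h3⟩

lemma sum_castLE_eq {M : Type*} [AddCommMonoid M] {a b : ℕ} (h : a ≤ b) (f : Fin b → M)
    (hf : ∀ j : Fin b, a ≤ (j : ℕ) → f j = 0) :
    ∑ j : Fin a, f (Fin.castLE h j) = ∑ j : Fin b, f j := by
  set F : ℕ → M := fun j => if h' : j < b then f ⟨j, h'⟩ else 0 with hF
  have e1 : ∑ j : Fin a, f (Fin.castLE h j) = ∑ j ∈ Finset.range a, F j := by
    rw [← Fin.sum_univ_eq_sum_range F a]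
    refine Finset.sum_congr rfl fun j _ => ?_
    simp only [hF]
    rw [dif_pos (lt_of_lt_of_le j.2 h)]
    rfl
  have e2 : ∑ j : Fin b, f j = ∑ j ∈ Finset.range b, F j := by
    rw [← Fin.sum_univ_eq_sum_range F b]
    refine Finset.sum_congr rfl fun j _ => ?_
    simp only [hF]
    rw [dif_pos j.2]
  rw [e1, e2]
  refine Finset.sum_subset (Finset.range_mono h) fun x hx hnx => ?_
  simp only [Finset.mem_range, not_lt] at hx hnx
  simp only [hF]
  rw [dif_pos hx]
  exact hf ⟨x, hx⟩ hnx

/-- if `b ≠ 0`, `m_k` is minimal with `b^{(k)}_{m_k} = ⋯ = b^{(k)}_{n_k-1} = 0`,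
`z` is in the generic stratum and `zb = 0`, then `m₁ + ⋯ + m_ℓ > r + 1`. -/
theorem stmt15 (ℓ r : ℕ) (n : Fin ℓ → ℕ) (hN : r + 1 < ∑ k, n k)
    (z : ∀ k, Matrix (Fin (r + 1)) (Fin (n k)) ℂ)
    (hz : ∀ μ : Fin ℓ → ℕ, ∀ hμ : (∀ k, μ k ≤ n k), (∑ k, μ k) = r + 1 →
      LinearIndependent ℂ
        (fun p : (Σ k, Fin (μ k)) => fun i : Fin (r + 1) => z p.1 i (Fin.castLE (hμ p.1) p.2)))
    (b : ∀ k, Fin (n k) → ℂ) (hb : ∃ k j, b k j ≠ 0)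
    (m : Fin ℓ → ℕ) (hmle : ∀ k, m k ≤ n k)
    (htail : ∀ k (j : Fin (n k)), m k ≤ (j : ℕ) → b k j = 0)
    (hmin : ∀ k (h : 0 < m k),
      b k ⟨m k - 1, lt_of_lt_of_le (Nat.sub_lt h Nat.one_pos) (hmle k)⟩ ≠ 0)
    (hzb : ∀ i, ∑ k, ((z k).mulVec (b k)) i = 0) :
    r + 1 < ∑ k, m k := by
  by_contra hcon
  push_neg at hcon
  obtain ⟨ν, hmν, hνn, hνsum⟩ :=
    exists_between_aux n (r + 1) hN.le ((r + 1) - ∑ k, m k) m hmle (by omega)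
  have hli := hz ν hνn hνsum
  rw [Fintype.linearIndependent_iff] at hli
  have hbtail : ∀ k (j : Fin (n k)), ν k ≤ (j : ℕ) → b k j = 0 :=
    fun k j hj => htail k j (le_trans (hmν k) hj)
  have key := hli (fun p => b p.1 (Fin.castLE (hνn p.1) p.2)) ?_
  · obtain ⟨k, j, hbkj⟩ := hb
    by_cases hj : (j : ℕ) < ν k
    · have := key ⟨k, ⟨(j : ℕ), hj⟩⟩
      simp only at this
      apply hbkj
      convert this using 2
      exact Fin.ext rfl
    · exact hbkj (hbtail k j (not_lt.1 hj))
  · funext i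
    simp only [Finset.sum_apply, Pi.smul_apply, smul_eq_mul, Pi.zero_apply]
    rw [← Finset.univ_sigma_univ, Finset.sum_sigma]
    have : ∀ k ∈ Finset.univ, ∑ j : Fin (ν k),
        b k (Fin.castLE (hνn k) j) * z k i (Fin.castLE (hνn k) j)
        = ((z k).mulVec (b k)) i := by
      intro k _
      rw [Matrix.mulVec, dotProduct]
      rw [← sum_castLE_eq (hνn k) (fun j => z k i j * b k j)
        (fun j hj => by simp [hbtail k j hj])]
      exact Finset.sum_congr rfl fun j _ => mul_comm _ _
    rw [Finset.sum_congr rfl this]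
    exact hzb i
end
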